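/- Let J ⊆ I ⊆ K be intervals with ℓ(J) ≤ ℓ(I), and suppose dist(J, ∂I) > 2 ℓ(J)^ε ℓ(I)^{1−ε} for some 0 < ε < 1/2. Then for every locally finite positive Borel measure μ, the Poisson integrals satisfy P(J, μ 1_{K∖I}) ≤ C_ε (ℓ(J)/ℓ(I))^{1−2ε} P(I, μ 1_{K∖I}), where P(Q,ν) = ∫ ℓ(Q)/(ℓ(Q)+|y−c_Q|)² dν(y). -/

import Mathlib

open MeasureTheory Set

lemma key15 (ε ℓJ ℓI r s : ℝ) (hε0 : 0 < ε) (hε : ε < 1 / 2) (hJ : 0 < ℓJ)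
    (hJI : ℓJ ≤ ℓI) (hr : 2 * ℓJ ^ ε * ℓI ^ (1 - ε) ≤ r) (hs : s ≤ r + ℓI / 2)
    (hs0 : 0 ≤ s) :
    ℓJ / (ℓJ + r) ^ 2 ≤ 4 * ((ℓJ / ℓI) ^ (1 - 2 * ε)) * (ℓI / (ℓI + s) ^ 2) := by
  have hI : 0 < ℓI := lt_of_lt_of_le hJ hJI
  set A : ℝ := (ℓI / ℓJ) ^ ε with hA
  have hx1 : (1:ℝ) ≤ ℓI / ℓJ := (one_le_div hJ).mpr hJI
  have hA1 : 1 ≤ A := Real.one_le_rpow hx1 hε0.le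
  have hd : 0 < ℓJ ^ ε * ℓI ^ (1 - ε) := by positivity
  have hr0 : 0 < r := lt_of_lt_of_le (by linarith) hr
  have hAd : A * (ℓJ ^ ε * ℓI ^ (1 - ε)) = ℓI := by
    rw [hA, Real.div_rpow hI.le hJ.le]
    have h1 : ℓJ ^ ε ≠ 0 := by positivity
    field_simp
    rw [← Real.rpow_add hI]
    norm_num
  have hr' : 2 * (ℓJ ^ ε * ℓI ^ (1 - ε)) ≤ r := by
    have : 2 * (ℓJ ^ ε * ℓI ^ (1 - ε)) = 2 * ℓJ ^ ε * ℓI ^ (1 - ε) := by ring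
    linarith [hr, this.le]
  have hIAr : 2 * ℓI ≤ A * r := by
    calc 2 * ℓI = 2 * (A * (ℓJ ^ ε * ℓI ^ (1 - ε))) := by rw [hAd]
    _ = A * (2 * (ℓJ ^ ε * ℓI ^ (1 - ε))) := by ring
    _ ≤ A * r := mul_le_mul_of_nonneg_left hr' (by linarith)
  have hE : ℓI + s ≤ 2 * A * (ℓJ + r) := by nlinarith
  have hE2 : (ℓI + s) ^ 2 ≤ (2 * A * (ℓJ + r)) ^ 2 := by
    apply sq_le_sq' <;> nlinarith
  have hid : ℓJ * A ^ 2 = ℓI * (ℓJ / ℓI) ^ (1 - 2 * ε) := by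
    rw [hA, Real.div_rpow hI.le hJ.le, Real.div_rpow hJ.le hI.le, div_pow,
      ← Real.rpow_natCast (ℓI ^ ε) 2, ← Real.rpow_natCast (ℓJ ^ ε) 2,
      ← Real.rpow_mul hI.le, ← Real.rpow_mul hJ.le]
    push_cast
    have h1 : ℓJ ^ (ε * 2) ≠ 0 := by positivity
    have h2 : ℓI ^ (1 - 2 * ε) ≠ 0 := by positivity
    field_simp
    rw [mul_assoc, ← Real.rpow_add hI, mul_assoc, mul_left_comm (ℓJ ^ (ε * 2)) ℓI,
      ← Real.rpow_add hJ, show ε * 2 + (1 - ε * 2) = 1 by ring,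
      Real.rpow_one, Real.rpow_one]
    ring
  have hJr : 0 < (ℓJ + r) ^ 2 := by positivity
  have hIs : 0 < (ℓI + s) ^ 2 := by positivity
  rw [div_le_iff₀ hJr]
  have hrhs : 4 * (ℓJ / ℓI) ^ (1 - 2 * ε) * (ℓI / (ℓI + s) ^ 2) * (ℓJ + r) ^ 2
      = (4 * (ℓI * (ℓJ / ℓI) ^ (1 - 2 * ε)) * (ℓJ + r) ^ 2) / (ℓI + s) ^ 2 := by
    field_simp
  rw [hrhs, le_div_iff₀ hIs]
  rw [← hid]
  nlinarith [hE2, hJ.le, sq_nonneg (ℓJ + r)]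

/-- The Poisson integral `P(J,ν) = ∫ ℓ/(ℓ+|t−c|)² dν(t)` of a measure `ν`, for an
interval with center `c` and length `ℓ`. -/
noncomputable def poissonIntegral (c ℓ : ℝ) (ν : Measure ℝ) : ℝ :=
  ∫ t, ℓ / (ℓ + |t - c|) ^ 2 ∂ν

lemma poisson_integrable (c ℓ : ℝ) (hℓ : 0 < ℓ) (ν : Measure ℝ) [IsFiniteMeasure ν] :
    Integrable (fun t => ℓ / (ℓ + |t - c|) ^ 2) ν := by
  have hcont : Continuous (fun t : ℝ => ℓ / (ℓ + |t - c|) ^ 2) := by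
    apply continuous_const.div
    · fun_prop
    · intro t
      have : 0 < ℓ + |t - c| := by positivity
      positivity
  refine (integrable_const (1 / ℓ)).mono' hcont.aestronglyMeasurable ?_
  filter_upwards with t
  have h1 : 0 < ℓ + |t - c| := by positivity
  rw [Real.norm_eq_abs, abs_of_nonneg (by positivity)]
  rw [div_le_div_iff₀ (by positivity) hℓ]
  nlinarith [abs_nonneg (t - c), sq_nonneg (|t - c|)]

/-- Poisson Decay Lemma (Nazarov–Treil–Volberg): if `J ⊆ I ⊆ K` are intervals with
`ℓ(J) ≤ ℓ(I)` and `dist(J,∂I) > 2 ℓ(J)^ε ℓ(I)^{1−ε}` for some `0 < ε < 1/2`, then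
`P(J, μ 1_{K∖I}) ≤ C_ε (ℓ(J)/ℓ(I))^{1−2ε} P(I, μ 1_{K∖I})` for every locally finite
positive Borel measure `μ`. -/
theorem stmt15 (ε : ℝ) (hε0 : 0 < ε) (hε : ε < 1 / 2) :
    ∃ C : ℝ, 0 < C ∧
      ∀ (μ : Measure ℝ), IsLocallyFiniteMeasure μ →
        ∀ aJ bJ aI bI aK bK : ℝ,
          aJ < bJ → aI ≤ aJ → bJ ≤ bI → aK ≤ aI → bI ≤ bK →
          bJ - aJ ≤ bI - aI →
          2 * (bJ - aJ) ^ ε * (bI - aI) ^ (1 - ε) < min (aJ - aI) (bI - bJ) →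
          poissonIntegral ((aJ + bJ) / 2) (bJ - aJ)
              (μ.restrict (Set.Ioo aK bK \ Set.Ioo aI bI))
            ≤ C * ((bJ - aJ) / (bI - aI)) ^ (1 - 2 * ε) *
                poissonIntegral ((aI + bI) / 2) (bI - aI)
                  (μ.restrict (Set.Ioo aK bK \ Set.Ioo aI bI)) := by
  refine ⟨4, by norm_num, ?_⟩
  intro μ hμ aJ bJ aI bI aK bK hJ haI hbI haK hbK hJI hdist
  set ℓJ := bJ - aJ with hℓJ
  set ℓI := bI - aI with hℓI
  set cJ := (aJ + bJ) / 2 with hcJ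
  set cI := (aI + bI) / 2 with hcI
  have hJ0 : 0 < ℓJ := by simp [hℓJ]; linarith
  have hI0 : 0 < ℓI := lt_of_lt_of_le hJ0 hJI
  set S : Set ℝ := Set.Ioo aK bK \ Set.Ioo aI bI with hS
  have hSm : MeasurableSet S := measurableSet_Ioo.diff measurableSet_Ioo
  set ν := μ.restrict S with hν
  have hfin : IsFiniteMeasure ν := by
    constructor
    rw [hν, Measure.restrict_apply_univ]
    calc μ S ≤ μ (Set.Icc aK bK) :=
      measure_mono (fun t ht => Ioo_subset_Icc_self ht.1)
    _ < ⊤ := (isCompact_Icc).measure_lt_top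
  have hintJ : Integrable (fun t => ℓJ / (ℓJ + |t - cJ|) ^ 2) ν :=
    poisson_integrable cJ ℓJ hJ0 ν
  have hintI : Integrable (fun t => ℓI / (ℓI + |t - cI|) ^ 2) ν :=
    poisson_integrable cI ℓI hI0 ν
  have hptwise : ∀ t ∈ S,
      ℓJ / (ℓJ + |t - cJ|) ^ 2
        ≤ 4 * ((ℓJ / ℓI) ^ (1 - 2 * ε)) * (ℓI / (ℓI + |t - cI|) ^ 2) := by
    intro t ht
    obtain ⟨htK, htI⟩ := ht
    have hcJ1 : aJ ≤ cJ := by rw [hcJ]; linarith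
    have hcJ2 : cJ ≤ bJ := by rw [hcJ]; linarith
    have hr : 2 * ℓJ ^ ε * ℓI ^ (1 - ε) ≤ |t - cJ| := by
      have hout : t ≤ aI ∨ bI ≤ t := by
        by_contra h
        push_neg at h
        exact htI ⟨h.1, h.2⟩
      have h1 := lt_min_iff.mp hdist
      rcases hout with h | h
      · calc 2 * ℓJ ^ ε * ℓI ^ (1 - ε) ≤ aJ - aI := h1.1.le
        _ ≤ cJ - t := by linarith
        _ = -(t - cJ) := by ring
        _ ≤ |t - cJ| := neg_le_abs _
      · calc 2 * ℓJ ^ ε * ℓI ^ (1 - ε) ≤ bI - bJ := h1.2.le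
        _ ≤ t - cJ := by linarith
        _ ≤ |t - cJ| := le_abs_self _
    have hs : |t - cI| ≤ |t - cJ| + ℓI / 2 := by
      have h1 : |t - cI| ≤ |t - cJ| + |cJ - cI| := by
        calc |t - cI| = |(t - cJ) + (cJ - cI)| := by ring_nf
        _ ≤ |t - cJ| + |cJ - cI| := abs_add_le _ _
      have h2 : |cJ - cI| ≤ ℓI / 2 := by
        rw [abs_le]
        constructor <;> [rw [hcJ, hcI, hℓI]; rw [hcJ, hcI, hℓI]] <;> linarith
      linarith
    exact key15 ε ℓJ ℓI (|t - cJ|) (|t - cI|) hε0 hε hJ0 hJI hr hs (abs_nonneg _)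
  have hae : ∀ᵐ t ∂ν, ℓJ / (ℓJ + |t - cJ|) ^ 2
      ≤ 4 * ((ℓJ / ℓI) ^ (1 - 2 * ε)) * (ℓI / (ℓI + |t - cI|) ^ 2) := by
    filter_upwards [ae_restrict_mem hSm] with t ht using hptwise t ht
  calc poissonIntegral cJ ℓJ ν
      = ∫ t, ℓJ / (ℓJ + |t - cJ|) ^ 2 ∂ν := rfl
    _ ≤ ∫ t, 4 * ((ℓJ / ℓI) ^ (1 - 2 * ε)) * (ℓI / (ℓI + |t - cI|) ^ 2) ∂ν :=
      integral_mono_ae hintJ (hintI.const_mul _) hae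
    _ = 4 * ((ℓJ / ℓI) ^ (1 - 2 * ε)) * ∫ t, ℓI / (ℓI + |t - cI|) ^ 2 ∂ν :=
      integral_const_mul _ _
    _ = 4 * ((ℓJ / ℓI) ^ (1 - 2 * ε)) * poissonIntegral cI ℓI ν := rfl
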